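/- Let φ be a nonzero C^4 function on [-1,1] satisfying φ'''' = λ φ on (-1,1) with λ > 0 and φ(-1) = φ(1) = φ'(-1) = φ'(1) = 0. Then for every t ∈ (-1,1), (φ''(-1))² = (φ''(t₀))² + λ (φ(t₀))² whenever φ'''(t₀) = 0; consequently the maximum of |φ''| over [-1,1] is attained at the endpoint -1 (and by symmetry at 1). -/

import Mathlib

open Set

/-- For a nonzero `C⁴` solution of `φ'''' = λφ` on `(-1,1)` with `λ > 0` and
`φ(±1) = φ'(±1) = 0`: at any interior critical point `t₀` of `φ''` one has
`(φ''(-1))² = (φ''(t₀))² + λ (φ(t₀))²`; consequently `|φ''|` attains its maximum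
over `[-1,1]` at `-1`. -/
theorem stmt_5 (lam : ℝ) (hlam : 0 < lam) (φ : ℝ → ℝ)
    (hφ : ContDiff ℝ (4 : ℕ∞) φ)
    (hode : ∀ x ∈ Ioo (-1 : ℝ) 1, iteratedDeriv 4 φ x = lam * φ x)
    (hb0 : φ (-1) = 0) (hb0' : φ 1 = 0)
    (hb1 : deriv φ (-1) = 0) (hb1' : deriv φ 1 = 0)
    (hne : ∃ x ∈ Icc (-1 : ℝ) 1, φ x ≠ 0) :
    (∀ t₀ ∈ Ioo (-1 : ℝ) 1, iteratedDeriv 3 φ t₀ = 0 →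
      (iteratedDeriv 2 φ (-1)) ^ 2 = (iteratedDeriv 2 φ t₀) ^ 2 + lam * (φ t₀) ^ 2) ∧
    (∀ t ∈ Icc (-1 : ℝ) 1, |iteratedDeriv 2 φ t| ≤ |iteratedDeriv 2 φ (-1)|) := by
  have hd : ∀ n : ℕ, n < 4 → Differentiable ℝ (iteratedDeriv n φ) := by
    intro n hn
    exact hφ.differentiable_iteratedDeriv n (by exact_mod_cast hn)
  have hder : ∀ n : ℕ, n < 4 → ∀ x : ℝ,
      HasDerivAt (iteratedDeriv n φ) (iteratedDeriv (n + 1) φ x) x := by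
    intro n hn x
    have h := ((hd n hn) x).hasDerivAt
    rwa [iteratedDeriv_succ]
  have h1eq : iteratedDeriv 1 φ = deriv φ := iteratedDeriv_one
  have hc' : ∀ n : ℕ, n ≤ 4 → Continuous (iteratedDeriv n φ) := fun n hn =>
    hφ.continuous_iteratedDeriv n (by exact_mod_cast hn)
  set E : ℝ → ℝ := fun x => (iteratedDeriv 2 φ x) ^ 2
      - 2 * iteratedDeriv 1 φ x * iteratedDeriv 3 φ x + lam * (φ x) ^ 2 with hEdef
  have hEderiv : ∀ x : ℝ,
      HasDerivAt E (2 * iteratedDeriv 1 φ x * (lam * φ x - iteratedDeriv 4 φ x)) x := by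
    intro x
    have h0 : HasDerivAt φ (iteratedDeriv 1 φ x) x := by
      have := hder 0 (by norm_num) x
      rwa [iteratedDeriv_zero] at this
    have h1 := hder 1 (by norm_num) x
    have h2 := hder 2 (by norm_num) x
    have h3 := hder 3 (by norm_num) x
    have hE' := (((h2.pow 2).sub
      (((h1.const_mul (2 : ℝ)).mul h3))).add ((h0.pow 2).const_mul lam))
    convert hE' using 1
    · rfl
    · rfl
    · funext y; simp [hEdef]
    · norm_num
      ring
  have hcont : ContinuousOn E (Icc (-1 : ℝ) 1) := by
    apply Continuous.continuousOn
    exact (((hc' 2 (by norm_num)).pow 2).sub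
      ((continuous_const.mul (hc' 1 (by norm_num))).mul (hc' 3 (by norm_num)))).add
      (continuous_const.mul (hφ.continuous.pow 2))
  have hconst : ∀ x ∈ Icc (-1 : ℝ) 1, E x = E (-1) := by
    apply constant_of_has_deriv_right_zero hcont
    intro x hx
    rcases eq_or_lt_of_le hx.1 with h | h
    · have h1 : iteratedDeriv 1 φ x = 0 := by
        rw [h1eq, ← h]; exact hb1
      have := hEderiv x
      rw [h1] at this
      simpa using this.hasDerivWithinAt
    · have hxI : x ∈ Ioo (-1 : ℝ) 1 := ⟨h, hx.2⟩
      have := hEderiv x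
      rw [hode x hxI] at this
      simpa using this.hasDerivWithinAt
  have hEm1 : E (-1) = (iteratedDeriv 2 φ (-1)) ^ 2 := by
    simp [hEdef, h1eq, hb0, hb1]
  have key : ∀ t₀ ∈ Ioo (-1 : ℝ) 1, iteratedDeriv 3 φ t₀ = 0 →
      (iteratedDeriv 2 φ (-1)) ^ 2 = (iteratedDeriv 2 φ t₀) ^ 2 + lam * (φ t₀) ^ 2 := by
    intro t₀ ht₀ h3
    have := hconst t₀ (Ioo_subset_Icc_self ht₀)
    rw [hEm1] at this
    simp only [hEdef, h3, mul_zero, sub_zero] at this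
    linarith
  refine ⟨key, ?_⟩
  -- part 2
  have hsq : ∀ t ∈ Icc (-1 : ℝ) 1,
      (iteratedDeriv 2 φ t) ^ 2 ≤ (iteratedDeriv 2 φ (-1)) ^ 2 → 
      |iteratedDeriv 2 φ t| ≤ |iteratedDeriv 2 φ (-1)| := by
    intro t _ h
    rw [← Real.sqrt_sq_eq_abs, ← Real.sqrt_sq_eq_abs]
    exact Real.sqrt_le_sqrt h
  have hcont2 : ContinuousOn (fun x => (iteratedDeriv 2 φ x) ^ 2) (Icc (-1 : ℝ) 1) := by
    exact ((hc' 2 (by norm_num)).pow 2).continuousOn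
  obtain ⟨c, hc, hmax⟩ := (isCompact_Icc (a := (-1:ℝ)) (b := 1)).exists_isMaxOn
    (nonempty_Icc.2 (by norm_num)) hcont2
  intro t ht
  apply hsq t ht
  have htc : (iteratedDeriv 2 φ t) ^ 2 ≤ (iteratedDeriv 2 φ c) ^ 2 := hmax ht
  rcases eq_or_lt_of_le hc.1 with h | hgt
  · rwa [← h] at htc
  rcases eq_or_lt_of_le hc.2 with h | hlt
  · -- c = 1
    have h1 : iteratedDeriv 1 φ c = 0 := by rw [h1eq, h]; exact hb1'
    have hEc := hconst c hc
    rw [hEm1] at hEc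
    simp only [hEdef, h1] at hEc
    have hφc : φ c = 0 := by rw [h]; exact hb0'
    rw [hφc] at hEc
    nlinarith
  · -- interior
    have hcI : c ∈ Ioo (-1 : ℝ) 1 := ⟨hgt, hlt⟩
    have hloc : IsLocalMax (fun x => (iteratedDeriv 2 φ x) ^ 2) c :=
      hmax.isLocalMax (Icc_mem_nhds hgt hlt)
    have hdg : HasDerivAt (fun x => (iteratedDeriv 2 φ x) ^ 2)
        (2 * iteratedDeriv 2 φ c ^ (2 - 1) * iteratedDeriv 3 φ c) c :=
      (hder 2 (by norm_num) c).pow 2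
    have hzero : (2 : ℝ) * iteratedDeriv 2 φ c ^ (2 - 1) * iteratedDeriv 3 φ c = 0 := by
      rw [← hdg.deriv]; exact hloc.deriv_eq_zero
    rcases mul_eq_zero.1 hzero with h2 | h3
    · rcases mul_eq_zero.1 h2 with h2 | h2
      · norm_num at h2
      · have h2' : iteratedDeriv 2 φ c = 0 := by simpa using h2
        rw [h2'] at htc
        nlinarith [sq_nonneg (iteratedDeriv 2 φ (-1))]
    · have := key c hcI h3
      nlinarith [sq_nonneg (φ c), mul_nonneg hlam.le (sq_nonneg (φ c))]
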